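/- With M and U as in the spin representation, the map s ↦ (1/2) Mᵀ (s + U) is a bijection from {-1,1}^{Nα} onto {0, 1, ..., 2^α - 1}^N. -/

import Mathlib

open Matrix

/-- The block binary-encoding matrix `M ∈ ℝ^{(Nα)×N}`. -/
def encodingMatrix (N α : ℕ) : Matrix (Fin (N * α)) (Fin N) ℝ :=
  fun k l => if (l : ℕ) * α ≤ (k : ℕ) ∧ (k : ℕ) < (l : ℕ) * α + α
    then 2 ^ ((k : ℕ) - (l : ℕ) * α) else 0

lemma emb_lt {N α : ℕ} (l : Fin N) (j : Fin α) : (l : ℕ) * α + (j : ℕ) < N * α := by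
  calc (l : ℕ) * α + (j : ℕ) < (l : ℕ) * α + α := by omega
  _ = ((l : ℕ) + 1) * α := by ring
  _ ≤ N * α := Nat.mul_le_mul_right _ (by omega)

lemma encoding_mulVec_apply {N α : ℕ} (v : Fin (N * α) → ℝ) (l : Fin N) :
    (encodingMatrix N α)ᵀ.mulVec v l
      = ∑ j : Fin α, (2 : ℝ) ^ (j : ℕ) * v ⟨(l : ℕ) * α + (j : ℕ), emb_lt l j⟩ := by
  classical
  simp only [mulVec, dotProduct, transpose_apply, encodingMatrix, ite_mul, zero_mul]
  rw [← Finset.sum_filter]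
  have himg : (Finset.univ.filter
      (fun k : Fin (N * α) => (l : ℕ) * α ≤ (k : ℕ) ∧ (k : ℕ) < (l : ℕ) * α + α))
      = Finset.image (fun j : Fin α => (⟨(l : ℕ) * α + (j : ℕ), emb_lt l j⟩ : Fin (N * α)))
        Finset.univ := by
    ext k
    simp only [Finset.mem_filter, Finset.mem_univ, true_and, Finset.mem_image]
    constructor
    · rintro ⟨h1, h2⟩
      refine ⟨⟨(k : ℕ) - (l : ℕ) * α, by omega⟩, ?_⟩
      apply Fin.ext
      simp
      omega
    · rintro ⟨j, rfl⟩
      constructor <;> simp <;> omega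
  have hinj : ∀ x ∈ (Finset.univ : Finset (Fin α)), ∀ y ∈ (Finset.univ : Finset (Fin α)),
      (⟨(l : ℕ) * α + (x : ℕ), emb_lt l x⟩ : Fin (N * α))
        = ⟨(l : ℕ) * α + (y : ℕ), emb_lt l y⟩ → x = y := by
    intro x _ y _ h
    have := congrArg Fin.val h
    simp only [] at this
    exact Fin.ext (by omega)
  rw [himg, Finset.sum_image hinj]
  apply Finset.sum_congr rfl
  intro j _
  simp

theorem spin_map_bijective (N α : ℕ) (hN : 0 < N) (hα : 0 < α) :
    Set.BijOn
      (fun s : Fin (N * α) → ℝ =>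
        (1 / 2 : ℝ) • (encodingMatrix N α)ᵀ.mulVec (s + fun _ => 1))
      {s | ∀ k, s k = -1 ∨ s k = 1}
      {w | ∀ i, ∃ m : ℕ, m ≤ 2 ^ α - 1 ∧ w i = (m : ℝ)} := by
  classical
  set F := (fun s : Fin (N * α) → ℝ =>
        (1 / 2 : ℝ) • (encodingMatrix N α)ᵀ.mulVec (s + fun _ => 1)) with hF
  -- bit extraction
  set bitOf : ℝ → Fin 2 := fun x => if x = 1 then 1 else 0 with hbit
  have hFval : ∀ (s : Fin (N * α) → ℝ), (∀ k, s k = -1 ∨ s k = 1) → ∀ l : Fin N,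
      F s l = ((finFunctionFinEquiv
        (fun j : Fin α => bitOf (s ⟨(l : ℕ) * α + (j : ℕ), emb_lt l j⟩)) : ℕ) : ℝ) := by
    intro s hs l
    have : F s l = (1/2 : ℝ) * ∑ j : Fin α,
        (2 : ℝ) ^ (j : ℕ) * (s ⟨(l : ℕ) * α + (j : ℕ), emb_lt l j⟩ + 1) := by
      simp only [hF, Pi.smul_apply, smul_eq_mul, encoding_mulVec_apply]
      simp
    rw [this, finFunctionFinEquiv_apply, Finset.mul_sum]
    push_cast
    apply Finset.sum_congr rfl
    intro j _
    rcases hs ⟨(l : ℕ) * α + (j : ℕ), emb_lt l j⟩ with h | h <;> rw [h] <;>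
      norm_num [hbit] <;> ring
  have hdivlt : ∀ k : Fin (N * α), (k : ℕ) / α < N := by
    intro k
    exact (Nat.div_lt_iff_lt_mul hα).mpr k.isLt
  have hidx : ∀ k : Fin (N * α),
      ((k : ℕ) / α) * α + ((k : ℕ) % α) = (k : ℕ) := by
    intro k
    rw [Nat.mul_comm]
    exact Nat.div_add_mod _ _
  refine ⟨?_, ?_, ?_⟩
  · -- MapsTo
    intro s hs i
    refine ⟨(finFunctionFinEquiv
      (fun j : Fin α => bitOf (s ⟨(i : ℕ) * α + (j : ℕ), emb_lt i j⟩)) : ℕ), ?_, ?_⟩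
    · have := (finFunctionFinEquiv
        (fun j : Fin α => bitOf (s ⟨(i : ℕ) * α + (j : ℕ), emb_lt i j⟩))).isLt
      omega
    · exact hFval s hs i
  · -- InjOn
    intro s hs s' hs' hss'
    funext k
    set l : Fin N := ⟨(k : ℕ) / α, hdivlt k⟩ with hl
    set j : Fin α := ⟨(k : ℕ) % α, Nat.mod_lt _ hα⟩ with hj
    have hk : (⟨(l : ℕ) * α + (j : ℕ), emb_lt l j⟩ : Fin (N * α)) = k := by
      apply Fin.ext; exact hidx k
    have h1 := hFval s hs l
    have h2 := hFval s' hs' l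
    have heq : F s l = F s' l := congrFun hss' l
    rw [h1, h2] at heq
    have hn : (finFunctionFinEquiv
        (fun j : Fin α => bitOf (s ⟨(l : ℕ) * α + (j : ℕ), emb_lt l j⟩)))
        = (finFunctionFinEquiv
        (fun j : Fin α => bitOf (s' ⟨(l : ℕ) * α + (j : ℕ), emb_lt l j⟩))) := by
      apply Fin.ext
      exact_mod_cast heq
    have hb := congrFun (finFunctionFinEquiv.injective hn) j
    rw [hk] at hb
    rcases hs k with h | h <;> rcases hs' k with h' | h' <;>
      simp [h, h', hbit] at hb ⊢ <;> norm_num at hb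
  · -- SurjOn
    intro w hw
    choose m hm hmw using hw
    have hmlt : ∀ i, m i < 2 ^ α := by
      intro i
      have h1 : 0 < 2 ^ α := Nat.pow_pos (by norm_num)
      have := hm i
      omega
    set b : Fin N → Fin α → Fin 2 := fun i => finFunctionFinEquiv.symm ⟨m i, hmlt i⟩ with hb
    set s : Fin (N * α) → ℝ := fun k =>
      if b ⟨(k : ℕ) / α, hdivlt k⟩ ⟨(k : ℕ) % α, Nat.mod_lt _ hα⟩ = 1 then 1 else -1 with hsdef
    have hsS : ∀ k, s k = -1 ∨ s k = 1 := by
      intro k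
      by_cases h : b ⟨(k : ℕ) / α, hdivlt k⟩ ⟨(k : ℕ) % α, Nat.mod_lt _ hα⟩ = 1 <;>
        simp [hsdef, h]
    refine ⟨s, hsS, ?_⟩
    funext i
    rw [hFval s hsS i]
    have hbits : (fun j : Fin α => bitOf (s ⟨(i : ℕ) * α + (j : ℕ), emb_lt i j⟩)) = b i := by
      funext j
      have hd : ((i : ℕ) * α + (j : ℕ)) / α = (i : ℕ) := by
        rw [Nat.add_comm, Nat.add_mul_div_right _ _ hα, Nat.div_eq_of_lt j.isLt]
        omega
      have hmo : ((i : ℕ) * α + (j : ℕ)) % α = (j : ℕ) := by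
        rw [Nat.add_comm, Nat.add_mul_mod_self_right]
        exact Nat.mod_eq_of_lt j.isLt
      have hfin1 : (⟨((i : ℕ) * α + (j : ℕ)) / α,
          hdivlt ⟨(i : ℕ) * α + (j : ℕ), emb_lt i j⟩⟩ : Fin N) = i := Fin.ext hd
      have hfin2 : (⟨((i : ℕ) * α + (j : ℕ)) % α, Nat.mod_lt _ hα⟩ : Fin α) = j := Fin.ext hmo
      have hsv : s ⟨(i : ℕ) * α + (j : ℕ), emb_lt i j⟩ = if b i j = 1 then 1 else -1 := by
        simp only [hsdef]
        rw [hfin1, hfin2]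
      rw [hsv]
      by_cases h : b i j = 1
      · simp [h, hbit]
      · rw [if_neg h]
        have h0 : bitOf (-1 : ℝ) = 0 := by norm_num [hbit]
        rw [h0]
        omega
    rw [hbits, hb, Equiv.apply_symm_apply]
    exact (hmw i).symm
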